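/- For the central binomial coefficients B_n = binom(2n,n), the k-fold convolution satisfies sum over (j_1,...,j_k) nonnegative integers with j_1+...+j_k = n of B_{j_1}···B_{j_k} = 4^n * (falling factorial of (n-1+k/2) of length n) / n!. -/

import Mathlib

open Finset Polynomial

lemma desc_prod (x : ℚ) : ∀ n : ℕ, (descPochhammer ℤ n).smeval x = ∏ i ∈ range n, (x - i)
  | 0 => by simp [descPochhammer_zero, smeval_one]
  | n+1 => by
    rw [descPochhammer_succ_right, smeval_mul, desc_prod x n, prod_range_succ,
      smeval_sub, smeval_X, smeval_natCast]
    ring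

lemma ring_choose_eq (x : ℚ) (n : ℕ) :
    Ring.choose x n = (∏ i ∈ range n, (x - i)) / n.factorial := by
  rw [← desc_prod, Ring.descPochhammer_eq_factorial_smul_choose, nsmul_eq_mul]
  have hfact : (n.factorial : ℚ) ≠ 0 := by exact_mod_cast Nat.factorial_ne_zero n
  field_simp

lemma centralBinom_eq (n : ℕ) :
    (((2 * n).choose n : ℚ)) = (-4 : ℚ) ^ n * Ring.choose (-1/2 : ℚ) n := by
  induction n with
  | zero => simp [ring_choose_eq]
  | succ n ih =>
    have h : (n + 1) * Nat.centralBinom (n + 1) = 2 * (2 * n + 1) * Nat.centralBinom n :=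
      Nat.succ_mul_centralBinom_succ n
    have h2 : ((n:ℚ) + 1) * ((2 * (n+1)).choose (n+1) : ℚ)
        = 2 * (2 * n + 1) * ((2 * n).choose n : ℚ) := by
      exact_mod_cast congrArg (fun m : ℕ => (m : ℚ)) h
    have hn1 : ((n:ℚ) + 1) ≠ 0 := by positivity
    have hB : ((2 * (n+1)).choose (n+1) : ℚ)
        = 2 * (2 * n + 1) * ((2 * n).choose n : ℚ) / ((n:ℚ) + 1) := by
      field_simp
      linarith [h2]
    have hfact : (n.factorial : ℚ) ≠ 0 := by exact_mod_cast Nat.factorial_ne_zero n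
    rw [hB, ih, ring_choose_eq (-1/2 : ℚ) (n+1), ring_choose_eq (-1/2 : ℚ) n, prod_range_succ, Nat.factorial_succ]
    push_cast
    field_simp
    ring

lemma conv_step (f : ℕ → ℚ) (k n : ℕ) :
    ∑ j ∈ Finset.Nat.antidiagonalTuple (k+1) n, ∏ i, f (j i)
      = ∑ p ∈ Finset.HasAntidiagonal.antidiagonal n, f p.1 *
          ∑ j ∈ Finset.Nat.antidiagonalTuple k p.2, ∏ i, f (j i) := by
  simp_rw [mul_sum]
  rw [Finset.sum_sigma']
  refine Finset.sum_nbij'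
    (fun j => (⟨(j 0, ∑ i : Fin k, j i.succ), Fin.tail j⟩ : Σ _p : ℕ × ℕ, Fin k → ℕ))
    (fun x => Fin.cons x.1.1 x.2) ?_ ?_ ?_ ?_ ?_
  · intro j hj
    rw [Finset.Nat.mem_antidiagonalTuple] at hj
    refine Finset.mem_sigma.2 ⟨?_, ?_⟩
    · rw [Finset.HasAntidiagonal.mem_antidiagonal]
      rw [← hj, Fin.sum_univ_succ]
    · rw [Finset.Nat.mem_antidiagonalTuple]
      rfl
  · intro x hx
    rw [Finset.mem_sigma, Finset.HasAntidiagonal.mem_antidiagonal, Finset.Nat.mem_antidiagonalTuple] at hx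
    rw [Finset.Nat.mem_antidiagonalTuple, Fin.sum_univ_succ]
    simp only [Fin.cons_zero, Fin.cons_succ]
    rw [hx.2, hx.1]
  · intro j _; exact Fin.cons_self_tail j
  · intro x hx
    rw [Finset.mem_sigma, Finset.Nat.mem_antidiagonalTuple] at hx
    refine Sigma.ext ?_ ?_
    · simp only [Fin.cons_zero, Fin.cons_succ]
      simp [hx.2]
    · exact heq_of_eq (by simp)
  · intro j _
    rw [Fin.prod_univ_succ]
    rfl

lemma main_aux (k n : ℕ) (hk : 1 ≤ k) :
    (∑ j ∈ Finset.Nat.antidiagonalTuple k n, ∏ i, (((2 * j i).choose (j i) : ℚ)))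
      = (-4 : ℚ) ^ n * Ring.choose (-(k:ℚ)/2) n := by
  induction k generalizing n with
  | zero => omega
  | succ k ih =>
    rcases Nat.eq_or_lt_of_le hk with h1 | h1
    · obtain rfl : k = 0 := by omega
      rw [Finset.Nat.antidiagonalTuple_one, Finset.sum_singleton]
      simp only [Matrix.cons_val_fin_one, Fin.prod_univ_one]
      rw [centralBinom_eq]
      norm_num
    · have hk' : 1 ≤ k := by omega
      rw [conv_step (fun m => ((2 * m).choose m : ℚ))]
      have key : Ring.choose ((-1/2 : ℚ) + (-(k:ℚ)/2)) n =
          ∑ ij ∈ Finset.HasAntidiagonal.antidiagonal n,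
            Ring.choose (-1/2 : ℚ) ij.1 * Ring.choose (-(k:ℚ)/2) ij.2 :=
        Ring.add_choose_eq n (Commute.all _ _)
      have hterm : ∀ p ∈ Finset.HasAntidiagonal.antidiagonal n,
          ((2 * p.1).choose p.1 : ℚ) *
            ∑ j ∈ Finset.Nat.antidiagonalTuple k p.2, ∏ i, (((2 * j i).choose (j i) : ℚ))
          = (-4 : ℚ) ^ n * (Ring.choose (-1/2 : ℚ) p.1 * Ring.choose (-(k:ℚ)/2) p.2) := by
        intro p hp
        rw [Finset.HasAntidiagonal.mem_antidiagonal] at hp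
        rw [ih p.2 hk', centralBinom_eq, ← hp]
        ring
      rw [Finset.sum_congr rfl hterm, ← Finset.mul_sum, ← key]
      congr 1
      push_cast
      ring

lemma refl_prod (x : ℚ) : ∀ n : ℕ, ∏ i ∈ range n, ((n:ℚ) - 1 + x - i) = ∏ i ∈ range n, (x + i)
  | 0 => by simp
  | n+1 => by
    rw [prod_range_succ, prod_range_succ']
    have h1 : ∏ i ∈ range n, ((((n:ℕ)+1 : ℕ):ℚ) - 1 + x - i)
        = ∏ i ∈ range n, ((x+1) + i) := by
      rw [← refl_prod (x+1) n]
      refine prod_congr rfl fun i _ => ?_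
      push_cast
      ring
    push_cast at h1 ⊢
    rw [h1]
    have h2 : ∏ i ∈ range n, (x + 1 + (i:ℚ)) = ∏ i ∈ range n, (x + ((i:ℚ) + 1)) := by
      refine prod_congr rfl fun i _ => ?_
      ring
    rw [h2]
    ring

theorem centralBinom_multifold_convolution (k n : ℕ) (hk : 1 ≤ k) :
    (∑ j ∈ Finset.Nat.antidiagonalTuple k n, ∏ i, (((2 * j i).choose (j i) : ℚ)))
      = 4 ^ n * (∏ i ∈ Finset.range n, ((n : ℚ) - 1 + (k : ℚ) / 2 - (i : ℚ))) / (n.factorial : ℚ) := by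
  rw [main_aux k n hk, ring_choose_eq]
  have hneg : ∏ i ∈ range n, (-(k:ℚ)/2 - i) = (-1:ℚ)^n * ∏ i ∈ range n, ((k:ℚ)/2 + i) := by
    have hc : ∀ i ∈ range n, (-(k:ℚ)/2 - i) = (-1) * ((k:ℚ)/2 + i) := by
      intro i _; ring
    rw [prod_congr rfl hc, prod_mul_distrib, prod_const, card_range]
  rw [hneg, ← refl_prod ((k:ℚ)/2) n]
  have h4 : (-4:ℚ)^n * (-1:ℚ)^n = 4^n := by rw [← mul_pow]; norm_num
  linear_combination ((∏ i ∈ range n, ((n:ℚ) - 1 + (k:ℚ)/2 - i)) / n.factorial) * h4
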